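/- Let b, c, ρ ∈ ℂ with Re(ρ) > 0, let z ∈ ℂ, and let t ∈ ℂ with t ≠ 0. Then the family (G_n^{(b,c)}(z;ρ) · t^n)_{n∈ℤ} is summable and Σ_{n=-∞}^∞ G_n^{(b,c)}(z;ρ) t^n = Σ_{n=0}^∞ (c;ρ)_n · ((t - b/t)·z/2)^n / (n!)², i.e. the two-sided generating series equals the generalized confluent hypergeometric function ₁F₁((c;ρ),1;(t - b/t)z/2). -/

import Mathlib

open Complex MeasureTheory Real Set

/-- Extended Gamma function `Γ_ρ(x) = ∫_0^∞ t^(x-1) e^(-t-ρ/t) dt`. -/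
noncomputable def extGamma (ρ x : ℂ) : ℂ :=
  ∫ t in Ioi (0:ℝ), (t:ℂ) ^ (x - 1) * Complex.exp (-(t:ℂ) - ρ / (t:ℂ))

/-- Generalized Pochhammer symbol `(c;ρ)_μ = Γ_ρ(c+μ)/Γ(c)`. -/
noncomputable def genPoch (c ρ μ : ℂ) : ℂ := extGamma ρ (c + μ) / Complex.Gamma c

/-- Unified four parameter Bessel function `G_ν^{(b,c)}(z;ρ)` with complex order,
powers being principal complex powers. -/
noncomputable def unifiedG (b c ν ρ z : ℂ) : ℂ :=
  ∑' k : ℕ, (-b) ^ k * genPoch c ρ (2 * (k:ℂ) + ν) * (z / 2) ^ (2 * (k:ℂ) + ν) /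
    ((k.factorial : ℂ) * Complex.Gamma (ν + (k:ℂ) + 1) * Complex.Gamma (ν + 2 * (k:ℂ) + 1))

/-- Unified four parameter Bessel function with integer order, powers being integer powers. -/
noncomputable def unifiedGInt (b c ρ : ℂ) (ν : ℤ) (z : ℂ) : ℂ :=
  ∑' k : ℕ, (-b) ^ k * genPoch c ρ (2 * (k:ℂ) + (ν:ℂ)) * (z / 2) ^ (2 * (k:ℤ) + ν) /
    ((k.factorial : ℂ) * Complex.Gamma ((ν:ℂ) + (k:ℂ) + 1) * Complex.Gamma ((ν:ℂ) + 2 * (k:ℂ) + 1))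

/-- Pochhammer symbol `(a)_k = Γ(a+k)/Γ(a)`. -/
noncomputable def poch (a : ℂ) (k : ℕ) : ℂ := Complex.Gamma (a + (k:ℂ)) / Complex.Gamma a

/-- Generalized hypergeometric function `₀F₃`. -/
noncomputable def hyp0F3 (a₁ a₂ a₃ w : ℂ) : ℂ :=
  ∑' k : ℕ, w ^ k / (poch a₁ k * poch a₂ k * poch a₃ k * (k.factorial : ℂ))

/-- Generalized hypergeometric function `₂F₃`. -/
noncomputable def hyp2F3 (a₁ a₂ b₁ b₂ b₃ w : ℂ) : ℂ :=
  ∑' k : ℕ, poch a₁ k * poch a₂ k * w ^ k /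
    (poch b₁ k * poch b₂ k * poch b₃ k * (k.factorial : ℂ))

/-- Bessel function of the first kind `J_μ(z)` for real `z > 0`. -/
noncomputable def besselJ (μ : ℂ) (z : ℝ) : ℂ :=
  ∑' k : ℕ, (-1) ^ k * ((z:ℂ) / 2) ^ (2 * (k:ℂ) + μ) /
    ((k.factorial : ℂ) * Complex.Gamma (μ + (k:ℂ) + 1))

/-- Generalized four parameter spherical Bessel function
`g_ν^{(b,c)}(z;ρ) = √(π/(2z)) · G_{ν+1/2}^{(b,c-1/2)}(z;ρ)`. -/
noncomputable def sphG (b c ν ρ : ℂ) (z : ℝ) : ℂ :=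
  (Real.sqrt (π / (2 * z)) : ℂ) * unifiedG b (c - 1/2) (ν + 1/2) ρ (z:ℂ)

/-- Generalized four parameter Bessel-Clifford function
`C_ν^{(b,λ)}(z;ρ) = z^{-ν/2} · G_ν^{(b,λ)}(2√z;ρ)` for real `z > 0`. -/
noncomputable def cliffC (b lam ν ρ : ℂ) (z : ℝ) : ℂ :=
  (z:ℂ) ^ (-ν / 2) * unifiedG b lam ν ρ ((2 * Real.sqrt z : ℝ) : ℂ)

lemma aux_extGamma_norm_le (ρ x : ℂ) (hρ : 0 < ρ.re) (K : ℕ) (h1 : 1 ≤ x.re) (hK : x.re ≤ K) :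
    ‖extGamma ρ x‖ ≤ 1 + (K.factorial : ℝ) := by
  have hK1 : (1:ℝ) ≤ (K:ℝ) := le_trans h1 hK
  have hK0 : 0 < (K:ℝ) := by linarith
  set φ : ℝ → ℝ := fun s => Real.exp (-s) * s ^ ((1:ℝ) - 1) + Real.exp (-s) * s ^ ((K:ℝ) - 1)
    with hφdef
  have hφ1 : IntegrableOn (fun s : ℝ => Real.exp (-s) * s ^ ((1:ℝ)-1)) (Ioi 0) :=
    Real.GammaIntegral_convergent one_pos
  have hφK : IntegrableOn (fun s : ℝ => Real.exp (-s) * s ^ ((K:ℝ)-1)) (Ioi 0) :=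
    Real.GammaIntegral_convergent hK0
  have hφint : IntegrableOn φ (Ioi 0) := hφ1.add hφK
  set g : ℝ → ℝ := fun s => s ^ (x.re - 1) * Real.exp (-s - ρ.re / s) with hgdef
  have hnorm : ∀ s ∈ Ioi (0:ℝ), ‖(s:ℂ) ^ (x - 1) * Complex.exp (-(s:ℂ) - ρ / (s:ℂ))‖ = g s := by
    intro s hs
    simp only [mem_Ioi] at hs
    have e1 : (x-1).re = x.re - 1 := by simp [Complex.sub_re]
    have e2 : (-(s:ℂ) - ρ/(s:ℂ)).re = -s - ρ.re/s := by
      simp [Complex.sub_re, Complex.neg_re, Complex.div_ofReal_re]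
    rw [norm_mul,
      Complex.norm_cpow_eq_rpow_re_of_pos hs, Complex.norm_exp, hgdef, e1, e2]
  have hgle : ∀ s ∈ Ioi (0:ℝ), g s ≤ φ s := by
    intro s hs
    simp only [mem_Ioi] at hs
    simp only [hφdef, hgdef]
    have hexp : Real.exp (-s - ρ.re / s) ≤ Real.exp (-s) := by
      apply Real.exp_le_exp.2
      have : 0 < ρ.re / s := div_pos hρ hs
      linarith
    have hrpnn : (0:ℝ) ≤ s ^ (x.re - 1) := Real.rpow_nonneg hs.le _
    have hone : s ^ ((1:ℝ) - 1) = 1 := by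
      rw [show (1:ℝ) - 1 = 0 by norm_num, Real.rpow_zero]
    rcases le_or_gt s 1 with h | h
    · have h1' : s ^ (x.re - 1) ≤ 1 := Real.rpow_le_one hs.le h (by linarith)
      have hg1 : s ^ (x.re - 1) * Real.exp (-s - ρ.re / s) ≤ 1 * Real.exp (-s) :=
        mul_le_mul h1' hexp (Real.exp_pos _).le one_pos.le
      have h2 : 0 ≤ Real.exp (-s) * s ^ ((K:ℝ) - 1) :=
        mul_nonneg (Real.exp_pos _).le (Real.rpow_nonneg hs.le _)
      rw [hone]
      nlinarith [Real.exp_pos (-s)]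
    · have h1' : s ^ (x.re - 1) ≤ s ^ ((K:ℝ) - 1) :=
        Real.rpow_le_rpow_of_exponent_le h.le (by linarith)
      have hg1 : s ^ (x.re - 1) * Real.exp (-s - ρ.re / s) ≤ s ^ ((K:ℝ) - 1) * Real.exp (-s) :=
        mul_le_mul h1' hexp (Real.exp_pos _).le (Real.rpow_nonneg hs.le _)
      rw [hone]
      nlinarith [Real.exp_pos (-s)]
  have hgcont : ContinuousOn g (Ioi 0) := by
    apply ContinuousOn.mul
    · exact fun s hs => (Real.continuousAt_rpow_const s _ (Or.inl (ne_of_gt hs))).continuousWithinAt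
    · apply Real.continuous_exp.comp_continuousOn
      exact (continuous_neg.continuousOn).sub
        (continuousOn_const.div continuousOn_id (fun s hs => ne_of_gt hs))
  have hgmeas : AEStronglyMeasurable g (volume.restrict (Ioi 0)) :=
    hgcont.aestronglyMeasurable measurableSet_Ioi
  have hgint : IntegrableOn g (Ioi 0) := by
    apply Integrable.mono' hφint hgmeas
    filter_upwards [ae_restrict_mem measurableSet_Ioi] with s hs
    have hs' : 0 < s := hs
    rw [Real.norm_eq_abs, _root_.abs_of_nonneg
      (mul_nonneg (Real.rpow_nonneg hs'.le _) (Real.exp_pos _).le)]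
    exact hgle s hs
  calc ‖extGamma ρ x‖
      ≤ ∫ s in Ioi (0:ℝ), ‖(s:ℂ) ^ (x - 1) * Complex.exp (-(s:ℂ) - ρ / (s:ℂ))‖ :=
        norm_integral_le_integral_norm _
    _ = ∫ s in Ioi (0:ℝ), g s := setIntegral_congr_fun measurableSet_Ioi hnorm
    _ ≤ ∫ s in Ioi (0:ℝ), φ s := setIntegral_mono_on hgint hφint measurableSet_Ioi hgle
    _ = (∫ s in Ioi (0:ℝ), Real.exp (-s) * s ^ ((1:ℝ)-1)) +
        ∫ s in Ioi (0:ℝ), Real.exp (-s) * s ^ ((K:ℝ)-1) := integral_add hφ1 hφK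
    _ = Real.Gamma 1 + Real.Gamma K := by
        rw [← Real.Gamma_eq_integral one_pos, ← Real.Gamma_eq_integral hK0]
    _ ≤ 1 + (K.factorial : ℝ) := by
        rw [Real.Gamma_one]
        have hK1' : 1 ≤ K := by exact_mod_cast hK1
        obtain ⟨K', rfl⟩ : ∃ K', K = K' + 1 := ⟨K - 1, by omega⟩
        have e : Real.Gamma ((K' + 1 : ℕ) : ℝ) = (K'.factorial : ℝ) := by
          push_cast
          exact Real.Gamma_nat_eq_factorial K'
        rw [e]
        have h3 : (K'.factorial : ℝ) ≤ ((K'+1).factorial : ℝ) := by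
          exact_mod_cast Nat.factorial_le (Nat.le_succ K')
        linarith


open Filter in
lemma aux_summable_U (K₀ : ℕ) (x : ℝ) (hx : 0 ≤ x) :
    Summable fun m : ℕ => (1 + ((K₀ + m).factorial : ℝ)) * x ^ m / ((m.factorial : ℝ))^2 := by
  apply summable_of_ratio_norm_eventually_le (r := 1/2) (by norm_num)
  filter_upwards [eventually_ge_atTop (K₀ + ⌈4*x⌉₊)] with m hm
  have hm1 : (K₀:ℝ) ≤ m := by exact_mod_cast le_trans (Nat.le_add_right _ _) hm
  have hm2 : 4*x ≤ m := le_trans (Nat.le_ceil _)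
    (by exact_mod_cast le_trans (Nat.le_add_left _ _) hm)
  set F : ℝ := ((K₀ + m).factorial : ℝ) with hF
  have hF1 : (1:ℝ) ≤ F := by
    rw [hF]; exact_mod_cast Nat.one_le_iff_ne_zero.2 (K₀ + m).factorial_ne_zero
  have e1 : ((K₀ + (m+1)).factorial : ℝ) = ((K₀:ℝ) + m + 1) * F := by
    rw [hF, show K₀ + (m+1) = (K₀ + m) + 1 by ring, Nat.factorial_succ]
    push_cast; ring
  have key : 2 * ((1 + ((K₀ + (m+1)).factorial : ℝ)) * x) ≤ (1 + F) * ((m:ℝ)+1)^2 := by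
    rw [e1]
    have h2 : ((K₀:ℝ) + m + 1) ≤ 2*((m:ℝ)+1) := by linarith
    have c1 : 1 + ((K₀:ℝ) + m + 1) * F ≤ ((K₀:ℝ) + m + 1) * (1 + F) := by nlinarith
    have c2 : 2 * ((1 + ((K₀:ℝ) + m + 1) * F) * x) ≤ 2 * (((K₀:ℝ) + m + 1) * (1 + F) * x) := by
      nlinarith
    have hFx : (0:ℝ) ≤ (1 + F) * x := mul_nonneg (by linarith) hx
    have c3 : 2 * (((K₀:ℝ) + m + 1) * (1 + F) * x) ≤ 2 * (2*((m:ℝ)+1) * (1 + F) * x) := by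
      nlinarith [mul_le_mul_of_nonneg_right h2 hFx]
    have h4 : 4 * x ≤ (m:ℝ) + 1 := by linarith
    have hFm : (0:ℝ) ≤ (1 + F) * ((m:ℝ)+1) := mul_nonneg (by linarith) (by positivity)
    have c4 : 2 * (2*((m:ℝ)+1) * (1 + F) * x) ≤ (1 + F) * ((m:ℝ)+1)^2 := by
      nlinarith [mul_le_mul_of_nonneg_left h4 hFm]
    linarith
  have hfs : ((m+1).factorial : ℝ)^2 = ((m:ℝ)+1)^2 * ((m.factorial:ℝ))^2 := by
    rw [Nat.factorial_succ]; push_cast; ring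
  have hpos1 : (0:ℝ) < ((m.factorial:ℝ))^2 := by positivity
  have hpos2 : (0:ℝ) < ((m:ℝ)+1)^2 * ((m.factorial:ℝ))^2 := by positivity
  rw [Real.norm_eq_abs, Real.norm_eq_abs, _root_.abs_of_nonneg (by positivity),
    _root_.abs_of_nonneg (by positivity), hfs]
  have hrhs : 1/2 * ((1 + F) * x ^ m / ((m.factorial:ℝ))^2)
      = ((1 + F) * x^m) / (2 * ((m.factorial:ℝ))^2) := by ring
  rw [hrhs, div_le_div_iff₀ hpos2 (by positivity)]
  have expand : (1 + ((K₀ + (m+1)).factorial : ℝ)) * x ^ (m+1) * (2 * ((m.factorial:ℝ))^2)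
      = (2 * ((1 + ((K₀ + (m+1)).factorial : ℝ)) * x)) * (x^m * ((m.factorial:ℝ))^2) := by
    rw [pow_succ]; ring
  rw [expand]
  have := mul_le_mul_of_nonneg_right key
    (show (0:ℝ) ≤ x^m * ((m.factorial:ℝ))^2 by positivity)
  calc (2 * ((1 + ((K₀ + (m+1)).factorial : ℝ)) * x)) * (x^m * ((m.factorial:ℝ))^2)
      ≤ ((1 + F) * ((m:ℝ)+1)^2) * (x^m * ((m.factorial:ℝ))^2) := this
    _ = (1 + F) * x^m * (((m:ℝ)+1)^2 * ((m.factorial:ℝ))^2) := by ring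


lemma aux_alg (Bk P W T tk C kf mkf mf : ℂ) (htk : tk ≠ 0) (hC : C ≠ 0)
    (hkf : kf ≠ 0) (hmkf : mkf ≠ 0) (hmf : mf ≠ 0) :
    Bk * P * W / (kf * mkf * mf) * (T / tk) = P * W / (C * kf * mkf * mf) * (C * (Bk / tk) * T) := by
  rw [div_mul_div_comm, show C * (Bk / tk) * T = C * Bk * T / tk by ring, div_mul_div_comm,
    div_eq_div_iff (mul_ne_zero (mul_ne_zero (mul_ne_zero hkf hmkf) hmf) htk)
      (mul_ne_zero (mul_ne_zero (mul_ne_zero (mul_ne_zero hC hkf) hmkf) hmf) htk)]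
  ring


theorem stmt1 (b c ρ : ℂ) (hρ : 0 < ρ.re) (z t : ℂ) (ht : t ≠ 0) :
    Summable (fun n : ℤ => unifiedGInt b c ρ n z * t ^ n) ∧
      ∑' n : ℤ, unifiedGInt b c ρ n z * t ^ n =
        ∑' n : ℕ, genPoch c ρ (n:ℂ) * ((t - b / t) * z / 2) ^ n / ((n.factorial : ℂ)) ^ 2 := by
  classical
  set w : ℂ := z / 2 with hw
  set f : ℤ × ℕ → ℂ := fun p =>
    (-b) ^ p.2 * genPoch c ρ (2 * (p.2:ℂ) + (p.1:ℂ)) * w ^ (2 * (p.2:ℤ) + p.1) /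
      ((p.2.factorial : ℂ) * Complex.Gamma ((p.1:ℂ) + (p.2:ℂ) + 1) *
        Complex.Gamma ((p.1:ℂ) + 2 * (p.2:ℂ) + 1)) * t ^ p.1 with hfdef
  set g : ℕ × ℕ → ℂ := fun q =>
    genPoch c ρ (q.1:ℂ) * w ^ q.1 / ((q.1.factorial : ℂ))^2 *
      ((q.1.choose q.2 : ℂ) * (-(b / t)) ^ q.2 * t ^ (q.1 - q.2)) with hgdef
  set i : ℕ × ℕ → ℤ × ℕ := fun q => ((q.1:ℤ) - 2 * q.2, q.2) with hidef
  have h_inj : Function.Injective i := by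
    rintro ⟨m1, k1⟩ ⟨m2, k2⟩ h
    simp only [hidef, Prod.mk.injEq] at h
    obtain ⟨h1, h2⟩ := h
    subst h2
    have : m1 = m2 := by omega
    simp [this]
  have h_supp : Function.support f ⊆ Set.range i := by
    rintro ⟨n, k⟩ hp
    by_contra hcon
    have hneg : n + 2 * (k:ℤ) < 0 := by
      by_contra hge
      push_neg at hge
      refine hcon ⟨((n + 2*(k:ℤ)).toNat, k), ?_⟩
      have : ((n + 2*(k:ℤ)).toNat : ℤ) - 2*(k:ℤ) = n := by omega
      simp only [hidef, Prod.mk.injEq]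
      exact ⟨this, trivial⟩
    have hz : Complex.Gamma ((n:ℂ) + 2*(k:ℂ) + 1) = 0 := by
      obtain ⟨j, hj⟩ : ∃ j : ℕ, (n + 2*(k:ℤ) + 1) = -(j:ℤ) := ⟨(-(n+2*(k:ℤ)+1)).toNat, by omega⟩
      have e : ((n:ℂ) + 2*(k:ℂ) + 1) = -(j:ℕ) := by
        have h2 := congrArg (fun x : ℤ => (x : ℂ)) hj
        push_cast at h2 ⊢
        linear_combination h2
      rw [e, Complex.Gamma_neg_nat_eq_zero]
    apply hp
    simp only [hfdef]
    rw [hz, mul_zero, div_zero, zero_mul]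
  have h_fi : ∀ m k : ℕ, f (i (m, k)) = g (m, k) := by
    intro m k
    rcases le_or_gt k m with hkm | hkm
    · have hfk : ((k.factorial : ℂ)) ≠ 0 := Nat.cast_ne_zero.2 k.factorial_pos.ne'
      have hfmk : (((m-k).factorial : ℂ)) ≠ 0 := Nat.cast_ne_zero.2 (m-k).factorial_pos.ne'
      have hfm : ((m.factorial : ℂ)) ≠ 0 := Nat.cast_ne_zero.2 m.factorial_pos.ne'
      have e1 : (2 * (k:ℂ) + (((m:ℤ) - 2*(k:ℤ) : ℤ) : ℂ)) = (m:ℂ) := by push_cast; ring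
      have e2 : w ^ (2 * (k:ℤ) + ((m:ℤ) - 2*(k:ℤ))) = w ^ m := by
        rw [show 2 * (k:ℤ) + ((m:ℤ) - 2*(k:ℤ)) = (m:ℤ) by ring, zpow_natCast]
      have e3 : Complex.Gamma ((((m:ℤ) - 2*(k:ℤ) : ℤ):ℂ) + (k:ℂ) + 1) = ((m - k).factorial : ℂ) := by
        have e : ((((m:ℤ) - 2*(k:ℤ) : ℤ):ℂ) + (k:ℂ) + 1) = ((m - k : ℕ):ℂ) + 1 := by
          push_cast [Nat.cast_sub hkm]; ring
        rw [e, Complex.Gamma_nat_eq_factorial]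
      have e4 : Complex.Gamma ((((m:ℤ) - 2*(k:ℤ) : ℤ):ℂ) + 2*(k:ℂ) + 1) = (m.factorial : ℂ) := by
        have e : ((((m:ℤ) - 2*(k:ℤ) : ℤ):ℂ) + 2*(k:ℂ) + 1) = ((m:ℕ):ℂ) + 1 := by push_cast; ring
        rw [e, Complex.Gamma_nat_eq_factorial]
      have e5 : t ^ ((m:ℤ) - 2*(k:ℤ)) = t ^ (m - k) / t ^ k := by
        rw [show (m:ℤ) - 2*(k:ℤ) = ((m - k : ℕ) : ℤ) - (k:ℤ) by omega, zpow_sub₀ ht,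
          zpow_natCast, zpow_natCast]
      have hchoose : ((m.choose k : ℂ)) * (k.factorial : ℂ) * ((m-k).factorial : ℂ)
          = (m.factorial : ℂ) := by
        exact_mod_cast congrArg (Nat.cast : ℕ → ℂ) (Nat.choose_mul_factorial_mul_factorial hkm)
      have hC : (m.choose k : ℂ) ≠ 0 := Nat.cast_ne_zero.2 (Nat.choose_pos hkm).ne'
      have e6 : (-(b/t))^k = (-b)^k / t^k := by rw [← neg_div, div_pow]
      simp only [hfdef, hgdef, hidef]
      rw [e1, e2, e3, e4, e5, e6]
      rw [show ((m.factorial:ℂ))^2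
          = ((m.choose k:ℂ) * (k.factorial:ℂ) * ((m-k).factorial:ℂ)) * (m.factorial:ℂ) by
        rw [hchoose]; ring]
      exact aux_alg _ _ _ _ _ _ _ _ _ (pow_ne_zero k ht) hC hfk hfmk hfm
    · have hz1 : Complex.Gamma ((((m:ℤ) - 2*(k:ℤ) : ℤ):ℂ) + (k:ℂ) + 1) = 0 := by
        obtain ⟨j, hj⟩ : ∃ j : ℕ, ((m:ℤ) - 2*(k:ℤ) + (k:ℤ) + 1) = -(j:ℤ) :=
          ⟨(-((m:ℤ) - 2*(k:ℤ) + (k:ℤ) + 1)).toNat, by omega⟩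
        have e : ((((m:ℤ) - 2*(k:ℤ) : ℤ):ℂ) + (k:ℂ) + 1) = -(j:ℕ) := by
          have h2 := congrArg (fun x : ℤ => (x:ℂ)) hj
          push_cast at h2 ⊢
          linear_combination h2
        rw [e, Complex.Gamma_neg_nat_eq_zero]
      have hc0 : (m.choose k : ℕ) = 0 := Nat.choose_eq_zero_of_lt hkm
      simp only [hfdef, hgdef, hidef]
      rw [hz1, hc0]
      simp
  -- norms of g
  have h_gnorm : ∀ m k : ℕ, ‖g (m, k)‖ =
      ‖genPoch c ρ (m:ℂ)‖ * ‖w‖^m / ((m.factorial:ℝ))^2 *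
        ((m.choose k : ℝ) * ‖b/t‖^k * ‖t‖^(m-k)) := by
    intro m k
    simp only [hgdef, norm_mul, norm_div, norm_pow, norm_neg, Complex.norm_natCast]
  have h_vanish : ∀ m k : ℕ, m < k → ‖g (m, k)‖ = 0 := by
    intro m k hk
    rw [h_gnorm, Nat.choose_eq_zero_of_lt hk]
    simp
  have h_msum : ∀ m : ℕ, ∑' k : ℕ, ‖g (m, k)‖ =
      ‖genPoch c ρ (m:ℂ)‖ * ‖w‖^m / ((m.factorial:ℝ))^2 * (‖b/t‖ + ‖t‖)^m := by
    intro m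
    have hvan : ∀ k ∉ Finset.range (m+1), ‖g (m, k)‖ = 0 := fun k hk =>
      h_vanish m k (by simpa using hk)
    rw [tsum_eq_sum hvan, add_pow, Finset.mul_sum]
    apply Finset.sum_congr rfl
    intro k _
    rw [h_gnorm]
    ring
  set x : ℝ := ‖w‖ * (‖b/t‖ + ‖t‖) with hxdef
  have hx0 : 0 ≤ x := by positivity
  set S : ℕ → ℝ := fun m => ‖genPoch c ρ (m:ℂ)‖ * x^m / ((m.factorial:ℝ))^2 with hSdef
  have h_msum' : ∀ m, ∑' k : ℕ, ‖g (m, k)‖ = S m := by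
    intro m
    rw [h_msum]
    simp only [hSdef, hxdef]
    rw [mul_pow]
    ring
  have hS_nonneg : ∀ m, 0 ≤ S m := by
    intro m
    simp only [hSdef]
    exact div_nonneg (mul_nonneg (norm_nonneg _) (pow_nonneg hx0 m)) (by positivity)
  -- summability of S
  have hS_sum : Summable S := by
    set m₀ : ℕ := ⌈1 - c.re⌉₊ with hm₀
    set K₀ : ℕ := m₀ + ⌈c.re⌉₊ with hK₀
    rw [← summable_nat_add_iff m₀]
    have hU := (aux_summable_U K₀ x hx0).mul_left (x^m₀ / ‖Complex.Gamma c‖)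
    apply Summable.of_nonneg_of_le (fun m => hS_nonneg (m + m₀)) ?_ hU
    intro m
    have hc1 : 1 - c.re ≤ (m₀:ℝ) := Nat.le_ceil _
    have hc2 : c.re ≤ (⌈c.re⌉₊ : ℝ) := Nat.le_ceil _
    have hre : 1 ≤ (c + (((m + m₀ : ℕ)):ℂ)).re := by
      simp only [Complex.add_re, Complex.natCast_re]
      push_cast
      linarith
    have hreK : (c + (((m + m₀ : ℕ)):ℂ)).re ≤ ((K₀ + m : ℕ):ℝ) := by
      simp only [Complex.add_re, Complex.natCast_re, hK₀]
      push_cast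
      linarith
    have hbound := aux_extGamma_norm_le ρ _ hρ (K₀ + m) hre hreK
    have hP : ‖genPoch c ρ (((m + m₀ : ℕ)):ℂ)‖ ≤ (1 + ((K₀ + m).factorial : ℝ)) / ‖Complex.Gamma c‖ := by
      rw [genPoch, norm_div]
      rcases eq_or_lt_of_le (norm_nonneg (Complex.Gamma c)) with h0 | h0
      · rw [← h0, div_zero, div_zero]
      · exact (div_le_div_iff_of_pos_right h0).2 hbound
    have hfle : ((m.factorial : ℝ))^2 ≤ (((m + m₀).factorial : ℝ))^2 := by
      have h1 : (m.factorial : ℝ) ≤ ((m + m₀).factorial : ℝ) := by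
        exact_mod_cast Nat.factorial_le (Nat.le_add_right m m₀)
      exact pow_le_pow_left₀ (by positivity) h1 2
    calc S (m + m₀)
        = ‖genPoch c ρ (((m + m₀ : ℕ)):ℂ)‖ * (x^(m+m₀) / (((m + m₀).factorial:ℝ))^2) := by
          simp only [hSdef]; ring
      _ ≤ ((1 + ((K₀ + m).factorial : ℝ)) / ‖Complex.Gamma c‖) *
            (x^(m+m₀) / (((m + m₀).factorial:ℝ))^2) := by
          apply mul_le_mul_of_nonneg_right hP
          exact div_nonneg (pow_nonneg hx0 _) (by positivity)
      _ ≤ ((1 + ((K₀ + m).factorial : ℝ)) / ‖Complex.Gamma c‖) *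
            (x^(m+m₀) / ((m.factorial:ℝ))^2) := by
          apply mul_le_mul_of_nonneg_left _ (by positivity)
          exact div_le_div_of_nonneg_left (pow_nonneg hx0 _) (by positivity) hfle
      _ = x^m₀ / ‖Complex.Gamma c‖ * ((1 + ((K₀ + m).factorial : ℝ)) * x^m / ((m.factorial:ℝ))^2) := by
          rw [pow_add]
          ring
  -- summability of g, f
  have hg_norm_sum : Summable (fun q : ℕ × ℕ => ‖g q‖) := by
    rw [summable_prod_of_nonneg (fun q => norm_nonneg _)]
    constructor
    · intro m
      apply summable_of_ne_finset_zero (s := Finset.range (m+1))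
      intro k hk
      exact h_vanish m k (by simpa using hk)
    · exact (summable_congr h_msum').2 hS_sum
  have hg_sum : Summable g := Summable.of_norm hg_norm_sum
  have hfi_eq : f ∘ i = g := funext fun q => h_fi q.1 q.2
  have hzero : ∀ p ∉ Set.range i, f p = 0 := fun p hp =>
    Function.notMem_support.mp (fun hs => hp (h_supp hs))
  have hf_sum : Summable f := (h_inj.summable_iff hzero).1 (hfi_eq ▸ hg_sum)
  have hf_slice : ∀ n : ℤ, Summable (fun k : ℕ => f (n, k)) := fun n => hf_sum.prod_factor n
  -- identification with unifiedGInt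
  have h_un : ∀ n : ℤ, unifiedGInt b c ρ n z * t ^ n = ∑' k : ℕ, f (n, k) := by
    intro n
    rw [unifiedGInt, ← tsum_mul_right]
  constructor
  · obtain ⟨a, ha⟩ := hf_sum
    have h2 : HasSum (fun n : ℤ => ∑' k : ℕ, f (n, k)) a :=
      ha.prod_fiberwise (fun n => (hf_slice n).hasSum)
    exact (summable_congr h_un).2 h2.summable
  · calc ∑' n : ℤ, unifiedGInt b c ρ n z * t ^ n
        = ∑' n : ℤ, ∑' k : ℕ, f (n, k) := tsum_congr h_un
      _ = ∑' p : ℤ × ℕ, f p := (hf_sum.tsum_prod' hf_slice).symm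
      _ = ∑' q : ℕ × ℕ, f (i q) := (h_inj.tsum_eq h_supp).symm
      _ = ∑' q : ℕ × ℕ, g q := tsum_congr fun q => h_fi q.1 q.2
      _ = ∑' m : ℕ, ∑' k : ℕ, g (m, k) := hg_sum.tsum_prod' (fun m => hg_sum.prod_factor m)
      _ = ∑' n : ℕ, genPoch c ρ (n:ℂ) * ((t - b / t) * z / 2) ^ n / ((n.factorial : ℂ)) ^ 2 := by
          apply tsum_congr
          intro m
          have hvan : ∀ k ∉ Finset.range (m+1),
              ((m.choose k : ℂ) * (-(b / t)) ^ k * t ^ (m - k)) = 0 := by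
            intro k hk
            rw [Nat.choose_eq_zero_of_lt (by simpa using hk)]
            simp
          have step1 : ∑' k : ℕ, g (m, k)
              = genPoch c ρ (m:ℂ) * w ^ m / ((m.factorial : ℂ))^2 *
                ∑' k : ℕ, ((m.choose k : ℂ) * (-(b / t)) ^ k * t ^ (m - k)) := by
            simp only [hgdef]
            rw [tsum_mul_left]
          rw [step1, tsum_eq_sum hvan]
          have step2 : ∑ k ∈ Finset.range (m+1),
              ((m.choose k : ℂ) * (-(b / t)) ^ k * t ^ (m - k)) = (-(b/t) + t)^m := by
            rw [add_pow]
            apply Finset.sum_congr rfl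
            intro k _
            ring
          rw [step2, show (-(b/t) + t) = t - b/t by ring,
            show (t - b/t) * z / 2 = (t - b/t) * w by rw [hw]; ring, mul_pow]
          ring
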